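/- Let 𝒜 be a unital complex *-algebra and φ : 𝒜 → ℂ a linear functional with φ(1) = 1. Let B be a unital *-subalgebra of 𝒜 and let v ∈ 𝒜 be a unitary (v*v = vv* = 1) with φ(v) = 0 and φ(v*) = 0. Assume that B and the unital *-subalgebra generated by v are freely independent with respect to φ. Then the sets vBv* := {v b v* : b ∈ B} and B are freely independent with respect to φ. -/

import Mathlib

/-- Free independence of a family of subsets of a unital complex `*`-algebra `A` with
respect to a unital linear functional `φ`: alternating products of centered elements of the
unital `*`-subalgebras generated by the respective subsets have vanishing expectation. -/
def FreelyIndependent {A : Type*} [Ring A] [Algebra ℂ A] [StarRing A] [StarModule ℂ A]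
    (φ : A →ₗ[ℂ] ℂ) {κ : Type*} (S : κ → Set A) : Prop :=
  ∀ (p : ℕ), 1 ≤ p → ∀ (idx : Fin p → κ) (a : Fin p → A),
    (∀ j, a j ∈ StarAlgebra.adjoin ℂ (S (idx j))) →
    (∀ j, φ (a j) = 0) →
    (∀ (j : ℕ) (h : j + 1 < p), idx ⟨j, by omega⟩ ≠ idx ⟨j + 1, h⟩) →
    φ (List.ofFn a).prod = 0

/-- List form of free independence. -/
lemma freelyIndependent_list {A : Type*} [Ring A] [Algebra ℂ A] [StarRing A] [StarModule ℂ A]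
    {φ : A →ₗ[ℂ] ℂ} {κ : Type*} {S : κ → Set A} (h : FreelyIndependent φ S)
    (L : List (κ × A)) (hne : L ≠ [])
    (hmem : ∀ x ∈ L, x.2 ∈ StarAlgebra.adjoin ℂ (S x.1) ∧ φ x.2 = 0)
    (hchain : L.Chain' (fun x y => x.1 ≠ y.1)) :
    φ (L.map Prod.snd).prod = 0 := by
  have hp : 1 ≤ L.length := List.length_pos_iff.mpr hne
  have key := h L.length hp (fun j => (L.get j).1) (fun j => (L.get j).2)
    (fun j => (hmem _ (L.get_mem j)).1)
    (fun j => (hmem _ (L.get_mem j)).2)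
    (fun j hj => List.isChain_iff_getElem.mp hchain j (by omega))
  have : (List.ofFn fun j => (L.get j).2) = L.map Prod.snd := by
    rw [show (fun j => (L.get j).2) = Prod.snd ∘ L.get from rfl, ← List.map_ofFn,
      List.ofFn_get]
  rwa [this] at key

private lemma fin_two_sub_ne {a b : Fin 2} (h : a ≠ b) : (1 - a) ≠ (1 - b) := by
  revert a b; decide

lemma chain'_ofFn {α : Type*} {R : α → α → Prop} {n : ℕ} (f : Fin n → α)
    (h : ∀ (j : ℕ) (hj : j + 1 < n), R (f ⟨j, by omega⟩) (f ⟨j + 1, hj⟩)) :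
    (List.ofFn f).Chain' R := by
  refine List.isChain_iff_getElem.mpr ?_
  intro i hi
  simp only [List.length_ofFn] at hi
  rw [List.getElem_ofFn, List.getElem_ofFn]
  exact h i (by omega)

/-- Expansion lemma: replace each `v b v⋆` factor by the three factors `v`, `b`, `v⋆`. -/
lemma expand_aux {A : Type*} [Ring A] [Algebra ℂ A] [StarRing A] [StarModule ℂ A]
    (φ : A →ₗ[ℂ] ℂ) (B : StarSubalgebra ℂ A) (v : A)
    (hφv : φ v = 0) (hφvs : φ (star v) = 0) :
    ∀ L : List (Fin 2 × A),
      (∀ x ∈ L, (x.1 = 0 → ∃ b ∈ B, φ b = 0 ∧ x.2 = v * b * star v) ∧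
                (x.1 = 1 → x.2 ∈ B ∧ φ x.2 = 0)) →
      L.Chain' (fun x y => x.1 ≠ y.1) →
      ∃ L' : List (Fin 2 × A),
        (L'.map Prod.snd).prod = (L.map Prod.snd).prod ∧
        (∀ x ∈ L', x.2 ∈ StarAlgebra.adjoin ℂ ((![(B : Set A), {v}] : Fin 2 → Set A) x.1)
            ∧ φ x.2 = 0) ∧
        L'.Chain' (fun x y => x.1 ≠ y.1) ∧
        (L'.head?.map Prod.fst = L.head?.map (fun y => (1 - y.1 : Fin 2))) := by
  intro L
  induction L with
  | nil => intro _ _; exact ⟨[], rfl, by simp, List.isChain_nil, by simp⟩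
  | cons x rest ih =>
    intro hmem hchain
    obtain ⟨L'r, hprod, hmem', hchain', hhead'⟩ := ih
      (fun y hy => hmem y (List.mem_cons_of_mem _ hy)) hchain.tail
    have hvmem : v ∈ StarAlgebra.adjoin ℂ ((![(B : Set A), {v}] : Fin 2 → Set A) 1) := by
      apply StarAlgebra.subset_adjoin
      simp
    have hvsmem : star v ∈ StarAlgebra.adjoin ℂ ((![(B : Set A), {v}] : Fin 2 → Set A) 1) :=
      star_mem hvmem
    -- the expansion of the head
    have hx01 : x.1 = 0 ∨ x.1 = 1 := by omega
    obtain hx0 | hx1 := hx01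
    · obtain ⟨b, hbB, hφb, hxb⟩ := (hmem x (List.mem_cons_self)).1 hx0
      refine ⟨(1, v) :: (0, b) :: (1, star v) :: L'r, ?_, ?_, ?_, ?_⟩
      · simp only [List.map_cons, List.prod_cons, hprod, hxb]
        noncomm_ring
      · intro y hy
        simp only [List.mem_cons] at hy
        rcases hy with rfl | rfl | rfl | hy
        · exact ⟨hvmem, hφv⟩
        · exact ⟨StarAlgebra.subset_adjoin ℂ _ (by simpa using hbB), hφb⟩
        · exact ⟨hvsmem, hφvs⟩
        · exact hmem' y hy
      · refine List.IsChain.cons_cons (show (1 : Fin 2) ≠ 0 by decide)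
          (List.IsChain.cons_cons (show (0 : Fin 2) ≠ 1 by decide) ?_)
        rcases hL'r : L'r with _ | ⟨z, L'rt⟩
        · simp
        · refine List.IsChain.cons_cons ?_ (hL'r ▸ hchain')
          rw [hL'r] at hhead'
          rcases hrest : rest with _ | ⟨w, rt⟩
          · rw [hrest] at hhead'; simp at hhead'
          · rw [hrest] at hhead'
            simp only [List.head?_cons, Option.map_some] at hhead'
            have hzw : z.1 = 1 - w.1 := by injection hhead'
            have hxw : x.1 ≠ w.1 := by
              have := hchain
              rw [hrest] at this
              exact (List.isChain_cons_cons.mp this).1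
            show (1 : Fin 2) ≠ z.1
            rw [hzw, hx0] at *
            have := fin_two_sub_ne hxw
            rw [hx0] at this
            simpa using this
      · simp only [List.head?_cons, Option.map_some, hx0]
        decide
    · refine ⟨(0, x.2) :: L'r, ?_, ?_, ?_, ?_⟩
      · simp [hprod]
      · intro y hy
        simp only [List.mem_cons] at hy
        rcases hy with rfl | hy
        · obtain ⟨hB, hφ⟩ := (hmem x (List.mem_cons_self)).2 hx1
          exact ⟨StarAlgebra.subset_adjoin ℂ _ (by simpa using hB), hφ⟩
        · exact hmem' y hy
      · rcases hL'r : L'r with _ | ⟨z, L'rt⟩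
        · exact List.isChain_singleton _
        · refine List.IsChain.cons_cons ?_ (hL'r ▸ hchain')
          rw [hL'r] at hhead'
          rcases hrest : rest with _ | ⟨w, rt⟩
          · rw [hrest] at hhead'; simp at hhead'
          · rw [hrest] at hhead'
            simp only [List.head?_cons, Option.map_some] at hhead'
            have hzw : z.1 = 1 - w.1 := by injection hhead'
            have hxw : x.1 ≠ w.1 := by
              have := hchain
              rw [hrest] at this
              exact (List.isChain_cons_cons.mp this).1
            show (0 : Fin 2) ≠ z.1
            rw [hzw]
            have := fin_two_sub_ne hxw
            rw [hx1] at this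
            simpa using this
      · simp only [List.head?_cons, Option.map_some, hx1]
        decide

/-- If `v` is a unitary with `φ(v) = φ(v^*) = 0` which is free from a unital
`*`-subalgebra `B`, then `v B v^*` and `B` are freely independent. -/
theorem freelyIndependent_conj_of_free {A : Type*} [Ring A] [Algebra ℂ A] [StarRing A]
    [StarModule ℂ A] (φ : A →ₗ[ℂ] ℂ) (hφ1 : φ 1 = 1)
    (B : StarSubalgebra ℂ A) (v : A) (hv : v ∈ unitary A)
    (hφv : φ v = 0) (hφvs : φ (star v) = 0)
    (hfree : FreelyIndependent φ ![(B : Set A), {v}]) :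
    FreelyIndependent φ ![(fun b => v * b * star v) '' (B : Set A), (B : Set A)] := by
  obtain ⟨hvv, hvv'⟩ := Unitary.mem_iff.mp hv
  -- centering lemma: φ (v b v⋆) = 0 with b ∈ B implies φ b = 0
  have hcenter : ∀ b ∈ B, φ (v * b * star v) = 0 → φ b = 0 := by
    intro b hbB hφc
    set b₀ : A := b - φ b • 1 with hb₀
    have hφb₀ : φ b₀ = 0 := by
      simp [hb₀, hφ1]
    have hmem₀ : b₀ ∈ StarAlgebra.adjoin ℂ ((![(B : Set A), {v}] : Fin 2 → Set A) 0) := by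
      refine sub_mem (StarAlgebra.subset_adjoin ℂ _ (by simpa using hbB)) ?_
      exact SMulMemClass.smul_mem _ (one_mem _)
    have hvmem : v ∈ StarAlgebra.adjoin ℂ ((![(B : Set A), {v}] : Fin 2 → Set A) 1) := by
      apply StarAlgebra.subset_adjoin; simp
    have key := freelyIndependent_list hfree [(1, v), (0, b₀), (1, star v)] (by simp)
      (by
        intro x hx
        simp only [List.mem_cons] at hx
        rcases hx with rfl | rfl | rfl | h
        · exact ⟨hvmem, hφv⟩
        · exact ⟨hmem₀, hφb₀⟩
        · exact ⟨star_mem hvmem, hφvs⟩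
        · simp at h)
      (List.isChain_cons_cons.mpr ⟨show (1 : Fin 2) ≠ 0 by decide,
        List.isChain_cons_cons.mpr ⟨show (0 : Fin 2) ≠ 1 by decide, List.isChain_singleton _⟩⟩)
    simp only [List.map_cons, List.map_nil, List.prod_cons, List.prod_nil, mul_one] at key
    have h2 : v * (b₀ * star v) = v * b * star v - φ b • 1 := by
      rw [hb₀, sub_mul, smul_mul_assoc, one_mul, mul_sub, mul_smul_comm, hvv', mul_assoc]
    rw [h2, map_sub, map_smul, hφc, hφ1] at key
    simpa using key
  -- the subalgebra of elements conjugated into B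
  set C : StarSubalgebra ℂ A :=
    { carrier := {x | star v * x * v ∈ B}
      mul_mem' := by
        intro x y hx hy
        simp only [Set.mem_setOf_eq] at *
        have : star v * (x * y) * v = (star v * x * v) * (star v * y * v) := by
          have h1 : (star v * x * v) * (star v * y * v)
              = star v * x * (v * star v) * y * v := by noncomm_ring
          rw [h1, hvv']
          noncomm_ring
        rw [this]; exact mul_mem hx hy
      one_mem' := by
        simp only [Set.mem_setOf_eq, mul_one, hvv]
        exact one_mem B
      add_mem' := by
        intro x y hx hy
        simp only [Set.mem_setOf_eq, mul_add, add_mul] at *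
        exact add_mem hx hy
      zero_mem' := by
        simp only [Set.mem_setOf_eq, mul_zero, zero_mul]
        exact zero_mem B
      algebraMap_mem' := by
        intro c
        simp only [Set.mem_setOf_eq, Algebra.algebraMap_eq_smul_one, mul_smul_comm,
          smul_mul_assoc, mul_one, hvv]
        exact SMulMemClass.smul_mem _ (one_mem B)
      star_mem' := by
        intro x hx
        simp only [Set.mem_setOf_eq] at *
        have : star v * star x * v = star (star v * x * v) := by
          simp [star_mul, mul_assoc]
        rw [this]; exact star_mem hx } with hC
  have hsubC : (fun b => v * b * star v) '' (B : Set A) ⊆ (C : Set A) := by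
    rintro _ ⟨b, hbB, rfl⟩
    show star v * (v * b * star v) * v ∈ B
    have : star v * (v * b * star v) * v = (star v * v) * b * (star v * v) := by
      noncomm_ring
    rw [this, hvv, one_mul, mul_one]
    exact hbB
  have hadjC : StarAlgebra.adjoin ℂ ((fun b => v * b * star v) '' (B : Set A)) ≤ C :=
    StarAlgebra.adjoin_le hsubC
  have hadjB : StarAlgebra.adjoin ℂ ((B : Set A)) ≤ B :=
    StarAlgebra.adjoin_le (le_refl _)
  -- main argument
  intro p hp idx a hmem hφa hne
  set L : List (Fin 2 × A) := List.ofFn (fun j => (idx j, a j)) with hL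
  have hLsnd : L.map Prod.snd = List.ofFn a := by
    rw [hL, List.map_ofFn]; rfl
  have hmemL : ∀ x ∈ L, (x.1 = 0 → ∃ b ∈ B, φ b = 0 ∧ x.2 = v * b * star v) ∧
      (x.1 = 1 → x.2 ∈ B ∧ φ x.2 = 0) := by
    intro x hx
    rw [hL, List.mem_ofFn] at hx
    obtain ⟨j, hj⟩ := hx
    subst hj
    constructor
    · intro h0
      have h0' : idx j = 0 := h0
      have hmj := hmem j
      rw [h0'] at hmj
      simp only [Matrix.cons_val_zero] at hmj
      have hCj : a j ∈ C := hadjC hmj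
      have hbB : star v * a j * v ∈ B := hCj
      show ∃ b ∈ B, φ b = 0 ∧ a j = v * b * star v
      refine ⟨star v * a j * v, hbB, ?_, ?_⟩
      · apply hcenter _ hbB
        have : v * (star v * a j * v) * star v = a j := by
          have h1 : v * (star v * a j * v) * star v
              = (v * star v) * a j * (v * star v) := by noncomm_ring
          rw [h1, hvv', one_mul, mul_one]
        rw [this]; exact hφa j
      · have : v * (star v * a j * v) * star v = a j := by
          have h1 : v * (star v * a j * v) * star v
              = (v * star v) * a j * (v * star v) := by noncomm_ring
          rw [h1, hvv', one_mul, mul_one]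
        rw [this]
    · intro h1
      have h1' : idx j = 1 := h1
      have hmj := hmem j
      rw [h1'] at hmj
      simp only [Matrix.cons_val_one, Matrix.head_cons] at hmj
      exact ⟨hadjB hmj, hφa j⟩
  have hchainL : L.Chain' (fun x y => x.1 ≠ y.1) := by
    rw [hL]
    exact chain'_ofFn _ (fun i hi => hne i hi)
  obtain ⟨L', hprod, hmem', hchain', hhead'⟩ :=
    expand_aux φ B v hφv hφvs L hmemL hchainL
  have hLne : L ≠ [] := by
    rw [hL]
    intro h
    have := congrArg List.length h
    simp at this
    omega
  have hL'ne : L' ≠ [] := by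
    intro h
    rw [h] at hhead'
    rcases hLh : L with _ | ⟨w, rt⟩
    · exact hLne hLh
    · rw [hLh] at hhead'; simp at hhead'
  have := freelyIndependent_list hfree L' hL'ne hmem' hchain'
  rw [hprod, hLsnd] at this
  exact this
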